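/- arXiv:1310.2321 — 2 statements merged into one kernel-verified Lean document; each statement's English description precedes it below -/
import Mathlib

section
/- Fix s, ε, τ ∈ ℝ with τ > 0, ε > 0, and let K, ρ, σ satisfy ρ > 0, σ ∈ ℝ, and 0 < K ≤ min(√(3/(128 ε ρ⁴ (1 + 4|σ|ρ⁴))), 1). Define ψ(x,t) = K(ρ² - |x-y|²)² h(t) on B_ρ(y) × [s-ε, s+ε/3], where h(t) = 1 - (t-s+ε)/(2ε). Then for all such (x,t), with r = |x-y|: Δ∞ψ + σ|Dψ|⁴ - 3∂ψ/∂t ≥ K(ρ²-r²)²(3/(2ε) - 64K²ρ⁴(1 + 4|σ|ρ⁴)) ≥ 0. -/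
open Real Set

/-- Partial derivative of `u` in the `i`-th coordinate direction. -/
noncomputable def pd {n : ℕ} (u : (Fin n → ℝ) → ℝ) (i : Fin n) (x : Fin n → ℝ) : ℝ :=
  fderiv ℝ u x (Pi.single i 1)

/-- The infinity-Laplacian `Δ∞ u = Σ_{i,j} u_{x_i} u_{x_j} u_{x_i x_j}`. -/
noncomputable def infLap {n : ℕ} (u : (Fin n → ℝ) → ℝ) (x : Fin n → ℝ) : ℝ :=
  ∑ i, ∑ j, pd u i x * pd u j x * pd (pd u i) j x

/-- Squared Euclidean norm of the spatial gradient: `|Du|² = Σ_i (∂u/∂x_i)²`. -/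
noncomputable def gradSq {n : ℕ} (u : (Fin n → ℝ) → ℝ) (x : Fin n → ℝ) : ℝ :=
  ∑ i, (pd u i x)^2

/-- Squared Euclidean norm on `Fin n → ℝ`. -/
noncomputable def normSq {n : ℕ} (x : Fin n → ℝ) : ℝ := ∑ i, (x i)^2

set_option maxHeartbeats 1000000

lemma hasFDerivAt_normSq {n : ℕ} (y x : Fin n → ℝ) :
    HasFDerivAt (fun x' => normSq (x' - y))
      (∑ i, (2 * (x i - y i)) • (ContinuousLinearMap.proj (R := ℝ) (φ := fun _ : Fin n => ℝ) i)) x := by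
  have : ∀ x' : Fin n → ℝ, normSq (x' - y) = ∑ i, (x' i - y i)^2 := by
    intro x'; simp [normSq, Pi.sub_apply]
  simp only [this]
  apply HasFDerivAt.fun_sum
  intro i _
  have h1 : HasFDerivAt (fun x' : Fin n → ℝ => x' i - y i)
      (ContinuousLinearMap.proj (R := ℝ) (φ := fun _ : Fin n => ℝ) i) x :=
    ((ContinuousLinearMap.proj (R := ℝ) (φ := fun _ : Fin n => ℝ) i).hasFDerivAt (x := x)).sub_const (y i)
  simpa [pow_two, two_mul, add_smul] using h1.fun_mul h1

lemma Lmap_apply_single {n : ℕ} (y x : Fin n → ℝ) (i : Fin n) :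
    (∑ k, (2 * (x k - y k)) • (ContinuousLinearMap.proj (R := ℝ) (φ := fun _ : Fin n => ℝ) k))
      (Pi.single i 1) = 2 * (x i - y i) := by
  simp [ContinuousLinearMap.sum_apply, Pi.single_apply, Finset.sum_ite_eq]

lemma pd_u {n : ℕ} (y x : Fin n → ℝ) (K ρ c : ℝ) (i : Fin n) :
    pd (fun x' => K * (ρ^2 - normSq (x' - y))^2 * c) i x
      = -4 * K * c * (ρ^2 - normSq (x - y)) * (x i - y i) := by
  have h : HasFDerivAt (fun x' => ρ^2 - normSq (x' - y))
      (-(∑ k, (2 * (x k - y k)) • (ContinuousLinearMap.proj (R := ℝ) (φ := fun _ : Fin n => ℝ) k))) x :=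
    (hasFDerivAt_normSq y x).const_sub (ρ^2)
  have h3 := ((h.fun_mul h).const_mul K).mul_const c
  have hu : (fun x' => K * (ρ^2 - normSq (x' - y))^2 * c)
      = (fun x' => K * ((ρ^2 - normSq (x' - y)) * (ρ^2 - normSq (x' - y))) * c) := by
    funext x'; ring
  rw [pd, hu, h3.fderiv]
  simp [ContinuousLinearMap.smul_apply, ContinuousLinearMap.add_apply, ContinuousLinearMap.neg_apply,
    Lmap_apply_single, smul_eq_mul, Pi.single_apply]
  ring

lemma pd_pd_u {n : ℕ} (y x : Fin n → ℝ) (K ρ c : ℝ) (i j : Fin n) :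
    pd (pd (fun x' => K * (ρ^2 - normSq (x' - y))^2 * c) i) j x
      = 8*K*c*(x i - y i)*(x j - y j)
        - 4*K*c*(ρ^2 - normSq (x - y)) * (if i = j then 1 else 0) := by
  have hfun : pd (fun x' => K * (ρ^2 - normSq (x' - y))^2 * c) i
      = fun x => (-4*K*c) * ((ρ^2 - normSq (x - y)) * (x i - y i)) := by
    funext x; rw [pd_u]; ring
  rw [hfun]
  have hg : HasFDerivAt (fun x' => ρ^2 - normSq (x' - y))
      (-(∑ k, (2 * (x k - y k)) • (ContinuousLinearMap.proj (R := ℝ) (φ := fun _ : Fin n => ℝ) k))) x :=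
    (hasFDerivAt_normSq y x).const_sub (ρ^2)
  have hp : HasFDerivAt (fun x' : Fin n → ℝ => x' i - y i)
      (ContinuousLinearMap.proj (R := ℝ) (φ := fun _ : Fin n => ℝ) i) x :=
    ((ContinuousLinearMap.proj (R := ℝ) (φ := fun _ : Fin n => ℝ) i).hasFDerivAt (x := x)).sub_const (y i)
  have h3 := (hg.fun_mul hp).const_mul (-4*K*c)
  rw [pd, h3.fderiv]
  simp [ContinuousLinearMap.smul_apply, ContinuousLinearMap.add_apply, ContinuousLinearMap.neg_apply,
    Lmap_apply_single, smul_eq_mul, Pi.single_apply]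
  by_cases hij : i = j <;> simp [hij] <;> ring


lemma gradSq_u {n : ℕ} (y x : Fin n → ℝ) (K ρ c : ℝ) :
    gradSq (fun x' => K * (ρ^2 - normSq (x' - y))^2 * c) x
      = 16*K^2*c^2*(ρ^2 - normSq (x - y))^2 * normSq (x - y) := by
  have hR : normSq (x - y) = ∑ k, (x k - y k)^2 := by simp [normSq]
  simp only [gradSq, pd_u]
  rw [hR, Finset.mul_sum]
  apply Finset.sum_congr rfl
  intro i _; ring


lemma double_sum {n : ℕ} (A B : ℝ) (v : Fin n → ℝ) :
    ∑ i, ∑ j, (A * (v i^2 * v j^2) - B * (if i = j then v i^2 else 0))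
      = A * (∑ i, v i^2)^2 - B * (∑ i, v i^2) := by
  have hS : ∀ i : Fin n, ∑ j, (A * (v i^2 * v j^2) - B * (if i = j then v i^2 else 0))
      = (A * (∑ j, v j ^ 2)) * v i^2 - B * v i^2 := by
    intro i
    rw [Finset.sum_sub_distrib]
    congr 1
    · rw [Finset.mul_sum, Finset.sum_mul]
      apply Finset.sum_congr rfl; intro j _; ring
    · simp
  simp only [hS]
  rw [Finset.sum_sub_distrib, ← Finset.mul_sum, ← Finset.mul_sum]
  ring

lemma infLap_u {n : ℕ} (y x : Fin n → ℝ) (K ρ c : ℝ) :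
    infLap (fun x' => K * (ρ^2 - normSq (x' - y))^2 * c) x
      = 128*K^3*c^3*(ρ^2 - normSq (x - y))^2*(normSq (x - y))^2
        - 64*K^3*c^3*(ρ^2 - normSq (x - y))^3*(normSq (x - y)) := by
  have hR : normSq (x - y) = ∑ k, (x k - y k)^2 := by simp [normSq]
  have key : ∀ i j : Fin n,
      pd (fun x' => K * (ρ^2 - normSq (x' - y))^2 * c) i x
        * pd (fun x' => K * (ρ^2 - normSq (x' - y))^2 * c) j x
        * pd (pd (fun x' => K * (ρ^2 - normSq (x' - y))^2 * c) i) j x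
      = 128*K^3*c^3*(ρ^2 - normSq (x - y))^2 * ((x i - y i)^2 * (x j - y j)^2)
        - 64*K^3*c^3*(ρ^2 - normSq (x - y))^3 * (if i = j then (x i - y i)^2 else 0) := by
    intro i j
    rw [pd_u, pd_u, pd_pd_u]
    by_cases hij : i = j <;> simp [hij] <;> ring
  simp only [infLap, key]
  rw [double_sum]
  rw [← hR]

lemma alg_ineq (ε K ρ σ R c : ℝ) (hε : 0 < ε) (hρ : 0 < ρ) (hK0 : 0 < K) (hK1 : K ≤ 1)
    (hKbd : 64 * K^2 * ρ^4 * (1 + 4 * |σ| * ρ^4) ≤ 3 / (2 * ε))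
    (hR0 : 0 ≤ R) (hx : R ≤ ρ^2) (hc1 : 1/3 ≤ c) (hc2 : c ≤ 1) :
    128*K^3*c^3*(ρ^2 - R)^2*R^2 - 64*K^3*c^3*(ρ^2 - R)^3*R
        + σ*(16*K^2*c^2*(ρ^2 - R)^2*R)^2 - 3*(K*(ρ^2 - R)^2*(-(1/(2*ε))))
      ≥ K * (ρ^2 - R)^2 * (3/(2*ε) - 64*K^2*ρ^4*(1 + 4 * |σ| * ρ^4)) := by
  obtain ⟨g, hg⟩ : ∃ g, g = ρ^2 - R := ⟨_, rfl⟩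
  rw [← hg]
  have hg0 : 0 ≤ g := by rw [hg]; linarith
  have hgρ : g ≤ ρ^2 := by rw [hg]; nlinarith
  have hc0 : (0:ℝ) < c := by linarith
  have e2 : g^2 ≤ ρ^4 := by nlinarith
  have e3 : R^2 ≤ ρ^4 := by nlinarith
  have hq : c^3 * (g * R - 2 * R^2) ≤ ρ^4 := by
    have hX : g * R - 2 * R^2 = R * (ρ^2 - 3*R) := by rw [hg]; ring
    rw [hX]
    rcases le_or_gt 0 (R * (ρ^2 - 3*R)) with hpos | hneg
    · have hc3 : c^3 ≤ 1 := pow_le_one₀ hc0.le hc2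
      have h1 : c^3 * (R * (ρ^2 - 3*R)) ≤ R * (ρ^2 - 3*R) := by nlinarith
      have h2 : R * (ρ^2 - 3*R) ≤ ρ^4 := by nlinarith [sq_nonneg R]
      linarith
    · have h1 : c^3 * (R * (ρ^2 - 3*R)) ≤ 0 := by nlinarith [pow_pos hc0 3]
      nlinarith [pow_pos hρ 4]
  have hT1 : 0 ≤ 128*K^3*c^3*g^2*R^2 - 64*K^3*c^3*g^3*R + 64*K^3*g^2*ρ^4 := by
    have key : 0 ≤ 64*K^3*g^2 * (ρ^4 - c^3 * (g * R - 2 * R^2)) := by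
      apply mul_nonneg (by positivity)
      linarith
    nlinarith [key]
  have e1 : K^4 * c^4 ≤ K^3 := by
    have h1 : c^4 ≤ 1 := pow_le_one₀ hc0.le hc2
    have h2 : K^4 ≤ K^3 := pow_le_pow_of_le_one hK0.le hK1 (by norm_num)
    calc K^4 * c^4 ≤ K^4 * 1 := by
          exact mul_le_mul_of_nonneg_left h1 (by positivity)
      _ = K^4 := mul_one _
      _ ≤ K^3 := h2
  have e5 : g^2 * R^2 ≤ ρ^8 := by nlinarith [sq_nonneg g, sq_nonneg R, pow_pos hρ 4]
  have hKc : K^4*c^4*g^4*R^2 ≤ K^3*g^2*ρ^8 := by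
    calc K^4*c^4*g^4*R^2 = (K^4*c^4)*(g^2*R^2)*g^2 := by ring
      _ ≤ K^3*(g^2*R^2)*g^2 :=
          mul_le_mul_of_nonneg_right (mul_le_mul_of_nonneg_right e1 (by positivity)) (sq_nonneg g)
      _ ≤ K^3*ρ^8*g^2 :=
          mul_le_mul_of_nonneg_right (mul_le_mul_of_nonneg_left e5 (by positivity)) (sq_nonneg g)
      _ = K^3*g^2*ρ^8 := by ring
  have hT2 : 0 ≤ 256*σ*(K^4*c^4*g^4*R^2) + 256*K^3 * |σ| * g^2*ρ^8 := by
    have hX : 0 ≤ K^4*c^4*g^4*R^2 := by positivity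
    have s1 : -|σ| * (K^4*c^4*g^4*R^2) ≤ σ * (K^4*c^4*g^4*R^2) :=
      mul_le_mul_of_nonneg_right (neg_abs_le σ) hX
    have s2 : |σ| * (K^4*c^4*g^4*R^2) ≤ |σ| * (K^3*g^2*ρ^8) :=
      mul_le_mul_of_nonneg_left hKc (abs_nonneg σ)
    linarith
  rw [ge_iff_le, ← sub_nonneg]
  have expand : 128*K^3*c^3*g^2*R^2 - 64*K^3*c^3*g^3*R + σ*(16*K^2*c^2*g^2*R)^2
        - 3*(K*g^2*(-(1/(2*ε))))
      - K*g^2*(3/(2*ε) - 64*K^2*ρ^4*(1+4 * |σ| * ρ^4))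
      = (128*K^3*c^3*g^2*R^2 - 64*K^3*c^3*g^3*R + 64*K^3*g^2*ρ^4)
        + (256*σ*(K^4*c^4*g^4*R^2) + 256*K^3 * |σ| * g^2*ρ^8) := by
    ring
  rw [expand]
  linarith

theorem stmt_13 (n : ℕ) (s ε τ K ρ σ : ℝ) (y : Fin n → ℝ)
    (hτ : 0 < τ) (hε : 0 < ε) (hρ : 0 < ρ)
    (hK0 : 0 < K)
    (hK : K ≤ min (Real.sqrt (3 / (128 * ε * ρ^4 * (1 + 4 * |σ| * ρ^4)))) 1)
    (h : ℝ → ℝ) (hh : ∀ t, h t = 1 - (t - s + ε) / (2 * ε))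
    (ψ : (Fin n → ℝ) → ℝ → ℝ)
    (hψ : ∀ x t, ψ x t = K * (ρ^2 - normSq (x - y))^2 * h t) :
    ∀ (x : Fin n → ℝ) (t : ℝ), normSq (x - y) ≤ ρ^2 →
      t ∈ Icc (s - ε) (s + ε/3) →
      infLap (fun x' => ψ x' t) x + σ * (gradSq (fun x' => ψ x' t) x)^2 -
          3 * deriv (ψ x) t ≥
        K * (ρ^2 - normSq (x - y))^2 *
          (3 / (2 * ε) - 64 * K^2 * ρ^4 * (1 + 4 * |σ| * ρ^4)) ∧
      K * (ρ^2 - normSq (x - y))^2 *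
          (3 / (2 * ε) - 64 * K^2 * ρ^4 * (1 + 4 * |σ| * ρ^4)) ≥ 0 := by
  intro x t hx ht
  -- basic facts
  have hM : (0:ℝ) < 1 + 4 * |σ| * ρ^4 := by positivity
  have hK1 : K ≤ 1 := le_trans hK (min_le_right _ _)
  have hKsq : K^2 ≤ 3 / (128 * ε * ρ^4 * (1 + 4 * |σ| * ρ^4)) := by
    have h1 : K ≤ Real.sqrt (3 / (128 * ε * ρ^4 * (1 + 4 * |σ| * ρ^4))) :=
      le_trans hK (min_le_left _ _)
    have h2 : (0:ℝ) ≤ 3 / (128 * ε * ρ^4 * (1 + 4 * |σ| * ρ^4)) := by positivity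
    calc K^2 ≤ (Real.sqrt (3 / (128 * ε * ρ^4 * (1 + 4 * |σ| * ρ^4))))^2 := by
          apply pow_le_pow_left₀ hK0.le h1
      _ = 3 / (128 * ε * ρ^4 * (1 + 4 * |σ| * ρ^4)) := Real.sq_sqrt h2
  have hKbd : 64 * K^2 * ρ^4 * (1 + 4 * |σ| * ρ^4) ≤ 3 / (2 * ε) := by
    have hden : (0:ℝ) < 128 * ε * ρ^4 * (1 + 4 * |σ| * ρ^4) := by positivity
    calc 64 * K^2 * ρ^4 * (1 + 4 * |σ| * ρ^4)
        ≤ 64 * (3 / (128 * ε * ρ^4 * (1 + 4 * |σ| * ρ^4))) * ρ^4 * (1 + 4 * |σ| * ρ^4) := by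
          nlinarith [hKsq, pow_pos hρ 4, hM]
      _ = 3 / (2 * ε) := by field_simp; ring
  -- h t bounds
  have hc1 : 1/3 ≤ h t := by
    rw [hh]
    have : (t - s + ε) / (2 * ε) ≤ 2/3 := by
      rw [div_le_iff₀ (by linarith)]
      have := ht.2
      linarith
    linarith
  have hc2 : h t ≤ 1 := by
    rw [hh]
    have : 0 ≤ (t - s + ε) / (2 * ε) := by
      apply div_nonneg _ (by linarith)
      have := ht.1
      linarith
    linarith
  -- R and g facts
  have hR0 : 0 ≤ normSq (x - y) := by
    unfold normSq; positivity
  have hg0 : 0 ≤ ρ^2 - normSq (x - y) := by linarith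
  -- second conclusion
  have hsecond : K * (ρ^2 - normSq (x - y))^2 *
      (3 / (2 * ε) - 64 * K^2 * ρ^4 * (1 + 4 * |σ| * ρ^4)) ≥ 0 := by
    apply mul_nonneg (mul_nonneg hK0.le (sq_nonneg _))
    linarith
  refine ⟨?_, hsecond⟩
  have hfun : (fun x' => ψ x' t) = (fun x' => K * (ρ^2 - normSq (x' - y))^2 * h t) :=
    funext fun x' => hψ x' t
  rw [hfun, infLap_u, gradSq_u]
  have hderiv : deriv (ψ x) t = K * (ρ^2 - normSq (x - y))^2 * (-(1/(2*ε))) := by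
    have hfun2 : ψ x = (fun t' => K * (ρ^2 - normSq (x - y))^2 * (1 - (t' - s + ε) / (2 * ε))) :=
      funext fun t' => by rw [hψ, hh]
    rw [hfun2]
    have h1 : HasDerivAt (fun t' : ℝ => 1 - (t' - s + ε) / (2 * ε)) (-(1/(2*ε))) t := by
      have h2 := ((((hasDerivAt_id t).sub_const s).add_const ε).div_const (2*ε)).const_sub 1
      simpa using h2
    exact (h1.const_mul (K * (ρ^2 - normSq (x - y))^2)).deriv
  rw [hderiv]
  exact alg_ineq ε K ρ σ (normSq (x - y)) (h t) hε hρ hK0 hK1 hKbd hR0 hx hc1 hc2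
end

section
/- Let 0 < ν < 1, c > 0, k > 0, Γ > 0, δ > 0, τ > 0 with c δ^ν = kτ ≤ Γ, and δ⁴ ≤ ν⁴ k² τ³ Γ / 3 (equivalently δ ≤ ν (k²τ³Γ/3)^{1/4}). Define for 0 < r ≤ δ the quantity E(r) = 3k + c³ν⁴ r^{3ν-4}(c r^ν - 2Γ). Then E(r) ≤ 3k - ν⁴ k³τ³ Γ/δ⁴ ≤ 0. -/
theorem stmt_17 (ν c k Γ δ τ : ℝ)
    (hν0 : 0 < ν) (hν1 : ν < 1) (hc : 0 < c) (hk : 0 < k) (hΓ : 0 < Γ)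
    (hδ : 0 < δ) (hτ : 0 < τ)
    (h1 : c * δ ^ ν = k * τ) (h2 : k * τ ≤ Γ)
    (h3 : δ^4 ≤ ν^4 * k^2 * τ^3 * Γ / 3) :
    ∀ r : ℝ, 0 < r → r ≤ δ →
      3 * k + c^3 * ν^4 * r ^ (3 * ν - 4) * (c * r ^ ν - 2 * Γ) ≤
        3 * k - ν^4 * k^3 * τ^3 * Γ / δ^4 ∧
      3 * k - ν^4 * k^3 * τ^3 * Γ / δ^4 ≤ 0 := by
  intro r hr hrδ
  have hδν : (0:ℝ) < δ ^ ν := Real.rpow_pos_of_pos hδ ν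
  have hrν : r ^ ν ≤ δ ^ ν := Real.rpow_le_rpow hr.le hrδ hν0.le
  have hA : c * r ^ ν - 2 * Γ ≤ -Γ := by nlinarith
  have hexp : (3*ν - 4 : ℝ) ≤ 0 := by linarith
  have hrp : δ ^ (3*ν-4) ≤ r ^ (3*ν-4) :=
    Real.rpow_le_rpow_of_nonpos hr hrδ hexp
  have hrp0 : 0 < δ ^ (3*ν-4) := Real.rpow_pos_of_pos hδ _
  have hrr0 : 0 < r ^ (3*ν-4) := Real.rpow_pos_of_pos hr _
  have hkey : δ ^ (3*ν-4) = (δ ^ ν)^3 / δ^4 := by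
    rw [show (3*ν-4:ℝ) = ν*3 + (-(4:ℝ)) by ring, Real.rpow_add hδ,
      Real.rpow_mul hδ.le, Real.rpow_neg hδ.le]
    rw [show ((3:ℝ) = ((3:ℕ):ℝ)) by norm_num, show ((4:ℝ) = ((4:ℕ):ℝ)) by norm_num,
      Real.rpow_natCast, Real.rpow_natCast]
    ring
  have hc3 : c^3 * (δ ^ ν)^3 = k^3 * τ^3 := by
    rw [← mul_pow, h1]; ring
  have hmain : c^3 * ν^4 * r ^ (3*ν-4) * (c * r ^ ν - 2 * Γ)
      ≤ -(ν^4 * Γ * (c^3 * (δ ^ (3*ν-4)))) := by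
    have h5 : c^3 * ν^4 * r ^ (3*ν-4) * (c * r ^ ν - 2 * Γ)
        ≤ c^3 * ν^4 * r ^ (3*ν-4) * (-Γ) := by
      apply mul_le_mul_of_nonneg_left hA
      positivity
    have h6 : c^3 * ν^4 * r ^ (3*ν-4) * (-Γ)
        ≤ c^3 * ν^4 * (δ ^ (3*ν-4)) * (-Γ) := by
      nlinarith [mul_le_mul_of_nonneg_left hrp (by positivity : (0:ℝ) ≤ c^3 * ν^4 * Γ)]
    nlinarith
  have hEq : ν^4 * Γ * (c^3 * (δ ^ (3*ν-4))) = ν^4 * k^3 * τ^3 * Γ / δ^4 := by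
    rw [hkey]
    field_simp
    linear_combination hc3
  constructor
  · have : 3 * ν - 4 = 3*ν - 4 := rfl
    have hmain' := hmain
    rw [hEq] at hmain'
    have : (3*ν-4:ℝ) = 3 * ν - 4 := by ring
    rw [this] at hmain'
    linarith
  · have hpos : (0:ℝ) < δ^4 := by positivity
    have : 3 * k ≤ ν^4 * k^3 * τ^3 * Γ / δ^4 := by
      rw [le_div_iff₀ hpos]
      nlinarith
    linarith
end
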